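/- For every integer r ≥ 3, every maximum matching M of the graph G_{2r+1} saturates the three vertices x, y and z, and leaves exactly 2r − 2 vertices unsaturated (equivalently, every maximum matching of G_{2r+1} has exactly 2r + 4 edges). -/

import Mathlib

/-- A matching `M` of `G` is maximum if no matching of `G` has more edges. -/
def SimpleGraph.IsMaximumMatching {α : Type*} (G : SimpleGraph α) (M : G.Subgraph) : Prop :=
  M.IsMatching ∧ ∀ M' : G.Subgraph, M'.IsMatching → M'.edgeSet.ncard ≤ M.edgeSet.ncard

/-- The (underlying simple) graph `G_n` of the paper (used with `n = 2r + 1`):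
the vertices `x, y, z` are encoded as `Sum.inl 0, Sum.inl 1, Sum.inl 2`, the vertex
`v_{k+1}^{(i)}` is encoded as `Sum.inr (k, i)`; `x` is joined to every `v_1^{(i)}`,
`y` to every `v_2^{(i)}`, `z` to every `v_3^{(i)}`, and for each `i` the vertices
`v_1^{(i)}, v_2^{(i)}, v_3^{(i)}` form a triangle. -/
def GGraph (n : ℕ) : SimpleGraph (Fin 3 ⊕ Fin 3 × Fin n) where
  Adj a b :=
    match a, b with
    | .inl k, .inr p => p.1 = k
    | .inr p, .inl k => p.1 = k
    | .inr p, .inr q => p.2 = q.2 ∧ p.1 ≠ q.1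
    | _, _ => False
  symm := by
    constructor
    rintro (k | p) (k' | q) h
    · exact h
    · exact h
    · exact h
    · exact ⟨h.1.symm, h.2.symm⟩
  loopless := by
    constructor
    rintro (k | p) h
    · exact h
    · exact h.2 rfl

open SimpleGraph

/-! ### Auxiliary material -/

section Label

/-- Label of a pair of vertices: a "hub" pair at `Sum.inl k` is labelled `inl k`, an
internal pair in triangle `i` is labelled `inr i`. -/
def lblFun (n : ℕ) : (Fin 3 ⊕ Fin 3 × Fin n) → (Fin 3 ⊕ Fin 3 × Fin n) → (Fin 3 ⊕ Fin n) :=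
  fun a b => match a, b with
  | .inl k, .inl k' => .inl (max k k')
  | .inl k, .inr _ => .inl k
  | .inr _, .inl k => .inl k
  | .inr p, .inr q => .inr (max p.2 q.2)

lemma lblFun_symm (n : ℕ) : ∀ a b, lblFun n a b = lblFun n b a := by
  rintro (k|p) (k'|q) <;> simp [lblFun, max_comm]

/-- The label of an edge. -/
def lbl (n : ℕ) : Sym2 (Fin 3 ⊕ Fin 3 × Fin n) → (Fin 3 ⊕ Fin n) :=
  Sym2.lift ⟨lblFun n, lblFun_symm n⟩

@[simp] lemma lbl_mk {n : ℕ} (a b : Fin 3 ⊕ Fin 3 × Fin n) :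
    lbl n s(a,b) = lblFun n a b := Sym2.lift_mk ..

lemma adj_unique {V : Type*} {G : SimpleGraph V} {M : G.Subgraph} (hM : M.IsMatching)
    {v a b : V} (h1 : M.Adj v a) (h2 : M.Adj v b) : a = b := by
  obtain ⟨w, -, hu⟩ := hM (M.edge_vert h1)
  rw [hu a h1, hu b h2]

lemma lbl_inl {n : ℕ} {M : (GGraph n).Subgraph} {e : Sym2 (Fin 3 ⊕ Fin 3 × Fin n)} {k : Fin 3}
    (he : e ∈ M.edgeSet) (hl : lbl n e = .inl k) :
    ∃ w, M.Adj (.inl k) w ∧ e = s(.inl k, w) := by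
  induction e using Sym2.ind with
  | _ a b =>
    rw [Subgraph.mem_edgeSet] at he
    rcases a with k' | p <;> rcases b with k'' | q
    · exact absurd (M.adj_sub he) (by simp [GGraph])
    · simp only [lbl_mk, lblFun, Sum.inl.injEq] at hl
      exact ⟨.inr q, hl ▸ he, by rw [hl]⟩
    · simp only [lbl_mk, lblFun, Sum.inl.injEq] at hl
      exact ⟨.inr p, hl ▸ he.symm, by rw [hl, Sym2.eq_swap]⟩
    · exact absurd hl (by simp [lblFun])

lemma lbl_inr {n : ℕ} {M : (GGraph n).Subgraph} {e : Sym2 (Fin 3 ⊕ Fin 3 × Fin n)} {i : Fin n}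
    (he : e ∈ M.edgeSet) (hl : lbl n e = .inr i) :
    ∃ p q : Fin 3 × Fin n, p.2 = i ∧ q.2 = i ∧ p.1 ≠ q.1 ∧
      M.Adj (.inr p) (.inr q) ∧ e = s(.inr p, .inr q) := by
  induction e using Sym2.ind with
  | _ a b =>
    rw [Subgraph.mem_edgeSet] at he
    rcases a with k' | p <;> rcases b with k'' | q
    · exact absurd (M.adj_sub he) (by simp [GGraph])
    · exact absurd hl (by simp [lblFun])
    · exact absurd hl (by simp [lblFun])
    · have hG : (GGraph n).Adj (.inr p) (.inr q) := M.adj_sub he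
      have h2 : p.2 = q.2 := hG.1
      have h1 : p.1 ≠ q.1 := hG.2
      simp only [lbl_mk, lblFun, Sum.inr.injEq] at hl
      rw [h2, max_self] at hl
      exact ⟨p, q, h2.trans hl, hl, h1, he, rfl⟩

lemma lbl_injOn {n : ℕ} {M : (GGraph n).Subgraph} (hM : M.IsMatching) :
    Set.InjOn (lbl n) M.edgeSet := by
  intro e₁ he₁ e₂ he₂ heq
  rcases hl : lbl n e₁ with k | i
  · obtain ⟨w, hw, hew⟩ := lbl_inl he₁ hl
    obtain ⟨w', hw', hew'⟩ := lbl_inl he₂ (heq ▸ hl)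
    rw [hew, hew', adj_unique hM hw hw']
  · obtain ⟨p, q, hp2, hq2, hpq, hadj, hew⟩ := lbl_inr he₁ hl
    obtain ⟨p', q', hp2', hq2', hpq', hadj', hew'⟩ := lbl_inr he₂ (heq ▸ hl)
    have hcases : p.1 = p'.1 ∨ p.1 = q'.1 ∨ q.1 = p'.1 ∨ q.1 = q'.1 := by
      have b1 := p.1.isLt; have b2 := q.1.isLt; have b3 := p'.1.isLt; have b4 := q'.1.isLt
      have n1 : p.1.val ≠ q.1.val := fun h => hpq (Fin.ext h)
      have n2 : p'.1.val ≠ q'.1.val := fun h => hpq' (Fin.ext h)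
      have : p.1.val = p'.1.val ∨ p.1.val = q'.1.val ∨ q.1.val = p'.1.val ∨
          q.1.val = q'.1.val := by omega
      rcases this with h | h | h | h
      · exact Or.inl (Fin.ext h)
      · exact Or.inr (Or.inl (Fin.ext h))
      · exact Or.inr (Or.inr (Or.inl (Fin.ext h)))
      · exact Or.inr (Or.inr (Or.inr (Fin.ext h)))
    have hpp' : (p : Fin 3 × Fin n) = p' → e₁ = e₂ := by
      intro h
      rw [hew, hew', ← h, adj_unique hM hadj (h ▸ hadj')]
    have hpq'' : p = q' → e₁ = e₂ := by
      intro h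
      rw [hew, hew', Sym2.eq_swap (a := Sum.inr p'),
        ← h, adj_unique hM hadj (h ▸ hadj'.symm)]
    have hqp' : q = p' → e₁ = e₂ := by
      intro h
      rw [hew, hew', Sym2.eq_swap (a := Sum.inr p), ← h,
        adj_unique hM hadj.symm (h ▸ hadj')]
    have hqq' : q = q' → e₁ = e₂ := by
      intro h
      rw [hew, hew', Sym2.eq_swap (a := Sum.inr p), Sym2.eq_swap (a := Sum.inr p'), ← h,
        adj_unique hM hadj.symm (h ▸ hadj'.symm)]
    rcases hcases with h | h | h | h
    · exact hpp' (Prod.ext h (hp2.trans hp2'.symm))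
    · exact hpq'' (Prod.ext h (hp2.trans hq2'.symm))
    · exact hqp' (Prod.ext h (hq2.trans hp2'.symm))
    · exact hqq' (Prod.ext h (hq2.trans hq2'.symm))

end Label

section ExplicitMatching

/-- the "missing" (unmatched-in-triangle) first coordinate of triangle `i` -/
def miss (r : ℕ) (i : Fin (2*r+1)) : Fin 3 := if h : i.val < 3 then ⟨i.val, h⟩ else 2

/-- embedding of `Fin 3` into the triangle indices -/
def emb3 (r : ℕ) (k : Fin 3) : Fin (2*r+1) := ⟨k.val % (2*r+1), Nat.mod_lt _ (by omega)⟩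

def M0Adj (r : ℕ) : (Fin 3 ⊕ Fin 3 × Fin (2*r+1)) → (Fin 3 ⊕ Fin 3 × Fin (2*r+1)) → Prop :=
  fun a b => match a, b with
  | .inl k, .inr p => p.1 = k ∧ p.2 = emb3 r k
  | .inr p, .inl k => p.1 = k ∧ p.2 = emb3 r k
  | .inr p, .inr q => p.2 = q.2 ∧ p.1 ≠ q.1 ∧ p.1 ≠ miss r p.2 ∧ q.1 ≠ miss r q.2
  | _, _ => False

/-- An explicit maximum matching of `G_{2r+1}`. -/
def M0 (r : ℕ) : (GGraph (2*r+1)).Subgraph where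
  verts := {a | ∃ b, M0Adj r a b}
  Adj := M0Adj r
  adj_sub := by
    rintro (k|p) (k'|q) h
    · exact h.elim
    · exact h.1
    · exact h.1
    · exact ⟨h.1, h.2.1⟩
  edge_vert := fun h => ⟨_, h⟩
  symm := by
    constructor
    rintro (k|p) (k'|q) h
    · exact h.elim
    · exact h
    · exact h
    · exact ⟨h.1.symm, h.2.1.symm, h.2.2.2, h.2.2.1⟩

lemma emb3_val {r : ℕ} (hr : 1 ≤ r) (k : Fin 3) : (emb3 r k).val = k.val :=
  Nat.mod_eq_of_lt (by have := k.isLt; omega)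

lemma miss_emb3 {r : ℕ} (hr : 1 ≤ r) (k : Fin 3) : miss r (emb3 r k) = k := by
  have h := emb3_val hr k
  have h3 := k.isLt
  simp only [miss, h]
  rw [dif_pos h3]

lemma M0_isMatching {r : ℕ} (hr : 1 ≤ r) : (M0 r).IsMatching := by
  rintro (k | p) hv
  · refine ⟨.inr (k, emb3 r k), ⟨rfl, rfl⟩, ?_⟩
    rintro (k' | q) hw
    · exact hw.elim
    · rw [show q = (k, emb3 r k) from Prod.ext hw.1 hw.2]
  · obtain ⟨b, hb⟩ := hv
    rcases b with k | q
    · obtain ⟨hb1, hb2⟩ := hb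
      have hmiss : miss r p.2 = p.1 := by rw [hb2, miss_emb3 hr, hb1]
      refine ⟨.inl k, ⟨hb1, hb2⟩, ?_⟩
      rintro (k' | q) hw
      · rw [show k' = k from by rw [← hw.1, hb1]]
      · exact absurd hmiss.symm hw.2.2.1
    · obtain ⟨hb1, hb2, hb3, hb4⟩ := hb
      refine ⟨.inr q, ⟨hb1, hb2, hb3, hb4⟩, ?_⟩
      rintro (k' | q') hw
      · have hmiss : miss r p.2 = p.1 := by rw [hw.2, miss_emb3 hr, hw.1]
        exact absurd hmiss.symm hb3
      · obtain ⟨hw1, hw2, hw3, hw4⟩ := hw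
        have e2 : q'.2 = q.2 := by rw [← hw1, hb1]
        have e1 : q'.1 = q.1 := by
          have hq4 : q.1 ≠ miss r p.2 := by rwa [← hb1] at hb4
          have hq4' : q'.1 ≠ miss r p.2 := by rwa [← hw1] at hw4
          have b1 := q.1.isLt; have b2 := q'.1.isLt; have b3 := p.1.isLt
          have b4 := (miss r p.2).isLt
          have n1 : q.1.val ≠ p.1.val := fun h => hb2 (Fin.ext h.symm)
          have n2 : q'.1.val ≠ p.1.val := fun h => hw2 (Fin.ext h.symm)
          have n3 : q.1.val ≠ (miss r p.2).val := fun h => hq4 (Fin.ext h)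
          have n4 : q'.1.val ≠ (miss r p.2).val := fun h => hq4' (Fin.ext h)
          have n5 : p.1.val ≠ (miss r p.2).val := fun h => hb3 (Fin.ext h)
          exact Fin.ext (by omega)
        rw [show q' = q from Prod.ext e1 e2]

lemma tri (m : Fin 3) : (if m = 0 then (1:Fin 3) else 0) ≠ (if m = 2 then (1:Fin 3) else 2) ∧
    (if m = 0 then (1:Fin 3) else 0) ≠ m ∧ (if m = 2 then (1:Fin 3) else 2) ≠ m := by
  revert m; decide

lemma lbl_surj {r : ℕ} (hr : 1 ≤ r) (l : Fin 3 ⊕ Fin (2*r+1)) :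
    ∃ e ∈ (M0 r).edgeSet, lbl (2*r+1) e = l := by
  rcases l with k | i
  · exact ⟨s(.inl k, .inr (k, emb3 r k)), Subgraph.mem_edgeSet.mpr ⟨rfl, rfl⟩,
      by simp [lblFun]⟩
  · obtain ⟨h1, h2, h3⟩ := tri (miss r i)
    refine ⟨s(.inr (if miss r i = 0 then (1:Fin 3) else 0, i),
        .inr (if miss r i = 2 then (1:Fin 3) else 2, i)),
      Subgraph.mem_edgeSet.mpr ⟨rfl, h1, h2, h3⟩, by simp [lblFun]⟩

lemma card_labels (r : ℕ) : Nat.card (Fin 3 ⊕ Fin (2*r+1)) = 2*r+4 := by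
  simp [Nat.card_eq_fintype_card]
  omega

lemma M0_edge_ncard {r : ℕ} (hr : 1 ≤ r) : (M0 r).edgeSet.ncard = 2*r+4 := by
  have himg : lbl (2*r+1) '' (M0 r).edgeSet = Set.univ :=
    Set.eq_univ_of_forall fun l => by
      obtain ⟨e, he, hl⟩ := lbl_surj hr l
      exact ⟨e, he, hl⟩
  calc (M0 r).edgeSet.ncard = (lbl (2*r+1) '' (M0 r).edgeSet).ncard :=
        (Set.ncard_image_of_injOn (lbl_injOn (M0_isMatching hr))).symm
    _ = (Set.univ : Set (Fin 3 ⊕ Fin (2*r+1))).ncard := by rw [himg]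
    _ = 2*r+4 := by rw [Set.ncard_univ, card_labels]

end ExplicitMatching

/-- Double counting: a matching covers twice as many vertices as it has edges. -/
lemma matching_ncard_verts {V : Type*} [Fintype V] {G : SimpleGraph V} {M : G.Subgraph}
    (hM : M.IsMatching) : M.verts.ncard = 2 * M.edgeSet.ncard := by
  classical
  set φ : V → Sym2 V := fun v => if h : v ∈ M.verts then (hM.toEdge ⟨v, h⟩ : Sym2 V) else s(v, v)
    with hφ
  have hmem : ∀ v ∈ M.verts.toFinset, φ v ∈ M.edgeSet.toFinset := by
    intro v hv
    rw [Set.mem_toFinset] at hv ⊢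
    simp only [hφ, dif_pos hv]
    exact (hM.toEdge ⟨v, hv⟩).2
  have hsum := Finset.card_eq_sum_card_fiberwise hmem
  have hfib : ∀ e ∈ M.edgeSet.toFinset, (M.verts.toFinset.filter (fun v => φ v = e)).card = 2 := by
    intro e
    induction e using Sym2.ind with
    | _ a b =>
      intro he
      rw [Set.mem_toFinset, Subgraph.mem_edgeSet] at he
      have hne : a ≠ b := (G.ne_of_adj (M.adj_sub he))
      have hset : M.verts.toFinset.filter (fun v => φ v = s(a, b)) = {a, b} := by
        ext v
        simp only [Finset.mem_filter, Set.mem_toFinset, Finset.mem_insert,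
          Finset.mem_singleton]
        constructor
        · rintro ⟨hv, hfv⟩
          simp only [hφ, dif_pos hv] at hfv
          have hvmem : v ∈ (hM.toEdge ⟨v, hv⟩ : Sym2 V) := by
            simp [SimpleGraph.Subgraph.IsMatching.toEdge]
          rw [hfv] at hvmem
          simpa using hvmem
        · rintro (rfl | rfl)
          · have hv : v ∈ M.verts := M.edge_vert he
            refine ⟨hv, ?_⟩
            simp only [hφ, dif_pos hv]
            rw [hM.toEdge_eq_of_adj he]
          · have hv : v ∈ M.verts := M.edge_vert he.symm
            refine ⟨hv, ?_⟩
            simp only [hφ, dif_pos hv]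
            rw [hM.toEdge_eq_of_adj he.symm]
            exact Sym2.eq_swap
      rw [hset, Finset.card_insert_of_notMem (by simpa using hne), Finset.card_singleton]
  rw [Finset.sum_congr rfl hfib, Finset.sum_const, smul_eq_mul, mul_comm] at hsum
  rw [Set.ncard_eq_toFinset_card', Set.ncard_eq_toFinset_card', hsum]

/-- Every maximum matching `M` of `G_{2r+1}` saturates `x`, `y` and `z`, leaves exactly
`2r - 2` vertices unsaturated, and has exactly `2r + 4` edges. -/
theorem stmt_8 (r : ℕ) (hr : 3 ≤ r) (M : (GGraph (2 * r + 1)).Subgraph)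
    (hM : (GGraph (2 * r + 1)).IsMaximumMatching M) :
    (∀ k : Fin 3, ∃ b, M.Adj (Sum.inl k) b) ∧
    {a : Fin 3 ⊕ Fin 3 × Fin (2 * r + 1) | ∀ b, ¬ M.Adj a b}.ncard = 2 * r - 2 ∧
    M.edgeSet.ncard = 2 * r + 4 := by
  have hr1 : 1 ≤ r := by omega
  -- lower bound from the explicit matching
  have hge : 2 * r + 4 ≤ M.edgeSet.ncard := by
    have := hM.2 (M0 r) (M0_isMatching hr1)
    rwa [M0_edge_ncard hr1] at this
  -- upper bound from injectivity of labels
  have hle : M.edgeSet.ncard ≤ 2 * r + 4 := by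
    have h := Set.ncard_le_ncard_of_injOn (lbl (2*r+1)) (fun e _ => Set.mem_univ _)
      (lbl_injOn hM.1) Set.finite_univ
    rwa [Set.ncard_univ, card_labels] at h
  have hcard : M.edgeSet.ncard = 2 * r + 4 := le_antisymm hle hge
  -- saturation of x, y, z
  have hsat : ∀ k : Fin 3, ∃ b, M.Adj (Sum.inl k) b := by
    intro k
    by_contra hk
    push_neg at hk
    have hmap : ∀ e ∈ M.edgeSet, lbl (2*r+1) e ∈ ({Sum.inl k}ᶜ : Set (Fin 3 ⊕ Fin (2*r+1))) := by
      intro e he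
      simp only [Set.mem_compl_iff, Set.mem_singleton_iff]
      intro hle'
      obtain ⟨w, hw, -⟩ := lbl_inl he hle'
      exact hk w hw
    have h := Set.ncard_le_ncard_of_injOn (lbl (2*r+1)) hmap (lbl_injOn hM.1)
      (Set.toFinite _)
    have hcompl : ({Sum.inl k}ᶜ : Set (Fin 3 ⊕ Fin (2*r+1))).ncard = 2*r+3 := by
      have := Set.ncard_add_ncard_compl ({Sum.inl k} : Set (Fin 3 ⊕ Fin (2*r+1)))
        (Set.toFinite _) (Set.toFinite _)
      rw [Set.ncard_singleton, card_labels] at this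
      omega
    rw [hcard, hcompl] at h
    omega
  refine ⟨hsat, ?_, hcard⟩
  -- unsaturated vertices
  have hverts : M.verts.ncard = 2 * (2 * r + 4) := by
    rw [matching_ncard_verts hM.1, hcard]
  have hU : {a : Fin 3 ⊕ Fin 3 × Fin (2 * r + 1) | ∀ b, ¬ M.Adj a b} = M.vertsᶜ := by
    rw [← hM.1.support_eq_verts]
    ext a
    simp [Subgraph.mem_support]
  have htot := Set.ncard_add_ncard_compl M.verts (Set.toFinite _) (Set.toFinite _)
  have hV : Nat.card (Fin 3 ⊕ Fin 3 × Fin (2 * r + 1)) = 6 * r + 6 := by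
    simp [Nat.card_eq_fintype_card]
    omega
  rw [hU]
  omega
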